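/- arXiv:2001.07325 — 4 statements merged into one kernel-verified Lean document; each statement's English description precedes it below -/
import Mathlib

section
/- For any two values x, y ∈ [n] and any permutation π ∈ S_n, the dual Foata–Strehl maps commute: φ_x(φ_y(π)) = φ_y(φ_x(π)). -/
/-- The extended one-line word of `w`, read 1-indexed, with the boundary
convention `π₀ = π_{n+1} = ∞`. -/
def ext (w : List ℕ) (i : ℕ) : ℕ∞ :=
  if 1 ≤ i ∧ i ≤ w.length then (w.getD (i - 1) 0 : ℕ∞) else ⊤

/-- The pinnacle set of the word `w`: values `π_i` with `π_{i-1} < π_i > π_{i+1}`. -/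
def pinnSet (w : List ℕ) : Finset ℕ :=
  ((Finset.Icc 1 w.length).filter fun i =>
      ext w (i - 1) < ext w i ∧ ext w (i + 1) < ext w i).image fun i => w.getD (i - 1) 0

/-- The vale set of the word `w`: values `π_i` with `π_{i-1} > π_i < π_{i+1}`. -/
def valeSet (w : List ℕ) : Finset ℕ :=
  ((Finset.Icc 1 w.length).filter fun i =>
      ext w i < ext w (i - 1) ∧ ext w i < ext w (i + 1)).image fun i => w.getD (i - 1) 0

/-- `w` is the one-line notation of a permutation of `[n] = {1, …, n}`. -/
def IsPermOf (n : ℕ) (w : List ℕ) : Prop := w.Perm (List.range' 1 n)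

/-- `w₁` in the `x`-factorization `w = w₁ w₂ x w₄ w₅`. -/
def fsW1 (x : ℕ) (w : List ℕ) : List ℕ :=
  ((w.take (w.idxOf x)).reverse.dropWhile fun a => decide (a < x)).reverse

/-- `w₂` in the `x`-factorization: the longest contiguous subword immediately to the
left of `x` all of whose letters are smaller than `x`. -/
def fsW2 (x : ℕ) (w : List ℕ) : List ℕ :=
  ((w.take (w.idxOf x)).reverse.takeWhile fun a => decide (a < x)).reverse

/-- `w₄` in the `x`-factorization: the longest contiguous subword immediately to the
right of `x` all of whose letters are smaller than `x`. -/
def fsW4 (x : ℕ) (w : List ℕ) : List ℕ :=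
  (w.drop (w.idxOf x + 1)).takeWhile fun a => decide (a < x)

/-- `w₅` in the `x`-factorization `w = w₁ w₂ x w₄ w₅`. -/
def fsW5 (x : ℕ) (w : List ℕ) : List ℕ :=
  (w.drop (w.idxOf x + 1)).dropWhile fun a => decide (a < x)

/-- The dual Foata–Strehl map `φ_x : w₁ w₂ x w₄ w₅ ↦ w₁ w₄ x w₂ w₅`. -/
def dualFS (x : ℕ) (w : List ℕ) : List ℕ :=
  if x ∈ w then fsW1 x w ++ fsW4 x w ++ [x] ++ fsW2 x w ++ fsW5 x w else w

/-- The dual Foata–Strehl map `φ_S` for a set `S`, i.e. the composition of the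
(commuting) maps `φ_x` over `x ∈ S`. -/
noncomputable def dualFSFinset (S : Finset ℕ) (w : List ℕ) : List ℕ :=
  S.toList.foldr dualFS w

/-- The largest letter of a word, with `wmax [] = 0`. -/
def wmax (w : List ℕ) : ℕ := w.foldr max 0

/-- The subword of `w` consisting of the letters lying in `A`. -/
def restrictTo (w : List ℕ) (A : Finset ℕ) : List ℕ :=
  w.filter fun a => decide (a ∈ A)

/-- `N_{PV}(k) = |V_k| - |P_k|` (natural subtraction). -/
def nPV (P V : Finset ℕ) (k : ℕ) : ℕ :=
  (V.filter fun v => v < k).card - (P.filter fun p => p < k).card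

/-- `N_{PV}(k) = |V_k| - |P_k|` as an integer. -/
def nPVZ (P V : Finset ℕ) (k : ℕ) : ℤ :=
  ((V.filter fun v => v < k).card : ℤ) - ((P.filter fun p => p < k).card : ℤ)

/-- `(P, V)` is admissible: some permutation of `[n]` has pinnacle set `P` and
vale set `V`. -/
def AdmissiblePair (n : ℕ) (P V : Finset ℕ) : Prop :=
  ∃ w : List ℕ, IsPermOf n w ∧ pinnSet w = P ∧ valeSet w = V

open Classical in
/-- `𝒱(P)`: the collection of all vale sets `V` for which `(P, V)` is admissible. -/
noncomputable def valeSetsOf (n : ℕ) (P : Finset ℕ) : Finset (Finset ℕ) :=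
  ((Finset.Icc 1 n).powerset).filter fun V => AdmissiblePair n P V

/-- `w` is FS-minimal: it has no double descents (with the `∞` boundary convention),
and for each pinnacle `p`, the `p`-factorization of the restriction of `w` to its
pinnacles and vales satisfies `max w₂ < max w₄`. -/
def FSMinimal (w : List ℕ) : Prop :=
  (∀ i ∈ Finset.Icc 1 w.length,
      ¬(ext w i < ext w (i - 1) ∧ ext w (i + 1) < ext w i)) ∧
  ∀ p ∈ pinnSet w,
    wmax (fsW2 p (restrictTo w (pinnSet w ∪ valeSet w))) <
      wmax (fsW4 p (restrictTo w (pinnSet w ∪ valeSet w)))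

/-- A `PV`-arrangement: a word listing each element of `P ∪ V` exactly once,
with pinnacle set `P` and vale set `V`. -/
def IsPVArrangement (P V : Finset ℕ) (α : List ℕ) : Prop :=
  α.Nodup ∧ α.toFinset = P ∪ V ∧ pinnSet α = P ∧ valeSet α = V

/-- A word is canonical (for pinnacle set `P`) if for each `p ∈ P` its
`p`-factorization satisfies `max w₂ < max w₄`. -/
def IsCanonical (P : Finset ℕ) (α : List ℕ) : Prop :=
  ∀ p ∈ P, wmax (fsW2 p α) < wmax (fsW4 p α)

/-- The number of descents of `w`: indices `j ∈ [n-1]` with `π_j > π_{j+1}`. -/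
def descentCount (w : List ℕ) : ℕ :=
  ((Finset.Icc 1 (w.length - 1)).filter fun j => w.getD j 0 < w.getD (j - 1) 0).card

/-- The original Foata–Strehl map `φ'_x`, defined like `φ_x` but with the words
`w₂, w₄` consisting of letters GREATER than `x`. -/
def origFS (x : ℕ) (w : List ℕ) : List ℕ :=
  if x ∈ w then
    ((w.take (w.idxOf x)).reverse.dropWhile fun a => decide (x < a)).reverse
      ++ ((w.drop (w.idxOf x + 1)).takeWhile fun a => decide (x < a)) ++ [x]
      ++ ((w.take (w.idxOf x)).reverse.takeWhile fun a => decide (x < a)).reverse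
      ++ ((w.drop (w.idxOf x + 1)).dropWhile fun a => decide (x < a))
  else w

/-- `C(l)`: weak compositions `(t₁, …, t_l)` of `l` with `t₁ + ⋯ + t_k ≥ k` for all `k`. -/
def weakComps (l : ℕ) : Finset (Fin l → ℕ) :=
  (Fintype.piFinset fun _ : Fin l => Finset.range (l + 1)).filter fun t =>
    (∑ i, t i) = l ∧ ∀ k : Fin l, (k : ℕ) + 1 ≤ ∑ i ∈ Finset.univ.filter (fun j => j ≤ k), t i

/-- `g_{i+1} = |G_{i+1}|`, the size of the `(i+1)`-st gap set
`G_{i+1} = {j ∈ [n] \ P : p_i < j < p_{i+1}}` (0-indexed `i`, with `p₀ = 1`). -/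
def gapCard (n : ℕ) (P : Finset ℕ) (i : ℕ) : ℕ :=
  (((Finset.Icc 1 n) \ P).filter fun j =>
      (if i = 0 then 1 else (P.sort (· ≤ ·)).getD (i - 1) 0) < j ∧
        j < (P.sort (· ≤ ·)).getD i 0).card

private lemma takeWhile_all {p : ℕ → Bool} {l l' : List ℕ} (h : ∀ a ∈ l, p a = true) :
    (l ++ l').takeWhile p = l ++ l'.takeWhile p := by
  have h1 := List.takeWhile_eq_self_iff.2 h
  rw [List.takeWhile_append, h1, if_pos rfl]

private lemma dropWhile_all {p : ℕ → Bool} {l l' : List ℕ} (h : ∀ a ∈ l, p a = true) :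
    (l ++ l').dropWhile p = l'.dropWhile p := by
  have h1 := List.dropWhile_eq_nil_iff.2 h
  rw [List.dropWhile_append, h1]
  simp

private lemma takeWhile_nil_head {p : ℕ → Bool} {l : List ℕ}
    (h : ∀ a ∈ l.head?, p a = false) : l.takeWhile p = [] := by
  cases l with
  | nil => rfl
  | cons a t => simp [List.takeWhile_cons, h a rfl]

private lemma dropWhile_self_head {p : ℕ → Bool} {l : List ℕ}
    (h : ∀ a ∈ l.head?, p a = false) : l.dropWhile p = l := by
  cases l with
  | nil => rfl
  | cons a t => simp [List.dropWhile_cons, h a rfl]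

private lemma head?_dropWhile (p : ℕ → Bool) (l : List ℕ) :
    ∀ a ∈ (l.dropWhile p).head?, p a = false := by
  induction l with
  | nil => simp
  | cons a t ih =>
    by_cases h : p a = true
    · simpa [List.dropWhile_cons, h] using ih
    · simp only [Bool.not_eq_true] at h
      simp [List.dropWhile_cons, h]

lemma fs_spec (x : ℕ) (A w2 w4 B : List ℕ)
    (hA : ∀ a ∈ A.getLast?, ¬ a < x)
    (h2 : ∀ a ∈ w2, a < x) (h4 : ∀ a ∈ w4, a < x)
    (hB : ∀ a ∈ B.head?, ¬ a < x)
    (hxA : x ∉ A) :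
    fsW1 x (A ++ w2 ++ [x] ++ w4 ++ B) = A ∧
      fsW2 x (A ++ w2 ++ [x] ++ w4 ++ B) = w2 ∧
      fsW4 x (A ++ w2 ++ [x] ++ w4 ++ B) = w4 ∧
      fsW5 x (A ++ w2 ++ [x] ++ w4 ++ B) = B := by
  have hsh : A ++ w2 ++ [x] ++ w4 ++ B = (A ++ w2) ++ (x :: (w4 ++ B)) := by simp
  have hx2 : x ∉ w2 := fun h => absurd (h2 x h) (lt_irrefl x)
  have hidx : (A ++ w2 ++ [x] ++ w4 ++ B).idxOf x = (A ++ w2).length := by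
    rw [hsh, List.idxOf_append_of_notMem (by simp [hxA, hx2]),
      List.idxOf_cons_self]
    simp
  have htake : (A ++ w2 ++ [x] ++ w4 ++ B).take ((A ++ w2).length) = A ++ w2 := by
    rw [hsh, List.take_left]
  have hdrop : (A ++ w2 ++ [x] ++ w4 ++ B).drop ((A ++ w2).length + 1) = w4 ++ B := by
    have : (A ++ w2).length + 1 = ((A ++ w2) ++ [x]).length := by simp; omega
    rw [hsh, this, show (A ++ w2) ++ (x :: (w4 ++ B)) = ((A ++ w2) ++ [x]) ++ (w4 ++ B) by simp,
      List.drop_left]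
  have h2' : ∀ a ∈ w2.reverse, (fun a => decide (a < x)) a = true := by
    intro a ha; simp only [List.mem_reverse] at ha; simpa using h2 a ha
  have hA' : ∀ a ∈ A.reverse.head?, (fun a => decide (a < x)) a = false := by
    intro a ha; rw [List.head?_reverse] at ha; simpa using hA a ha
  have h4' : ∀ a ∈ w4, (fun a => decide (a < x)) a = true := fun a ha => by simpa using h4 a ha
  have hB' : ∀ a ∈ B.head?, (fun a => decide (a < x)) a = false := fun a ha => by
    simpa using hB a ha
  refine ⟨?_, ?_, ?_, ?_⟩
  · rw [fsW1, hidx, htake, List.reverse_append, dropWhile_all h2', dropWhile_self_head hA',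
      List.reverse_reverse]
  · rw [fsW2, hidx, htake, List.reverse_append, takeWhile_all h2', takeWhile_nil_head hA']
    simp
  · rw [fsW4, hidx, hdrop, takeWhile_all h4', takeWhile_nil_head hB']
    simp
  · rw [fsW5, hidx, hdrop, dropWhile_all h4', dropWhile_self_head hB']

lemma dualFS_spec (x : ℕ) (A w2 w4 B : List ℕ)
    (hA : ∀ a ∈ A.getLast?, ¬ a < x)
    (h2 : ∀ a ∈ w2, a < x) (h4 : ∀ a ∈ w4, a < x)
    (hB : ∀ a ∈ B.head?, ¬ a < x)
    (hxA : x ∉ A) :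
    dualFS x (A ++ w2 ++ [x] ++ w4 ++ B) = A ++ w4 ++ [x] ++ w2 ++ B := by
  obtain ⟨e1, e2, e4, e5⟩ := fs_spec x A w2 w4 B hA h2 h4 hB hxA
  rw [dualFS, if_pos (by simp : x ∈ A ++ w2 ++ [x] ++ w4 ++ B), e1, e2, e4, e5]

lemma fs_exists (x : ℕ) (w : List ℕ) (hx : x ∈ w) :
    ∃ A u v B : List ℕ, w = A ++ u ++ [x] ++ v ++ B ∧
      (∀ a ∈ A.getLast?, ¬ a < x) ∧ (∀ a ∈ u, a < x) ∧ (∀ a ∈ v, a < x) ∧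
      (∀ a ∈ B.head?, ¬ a < x) := by
  refine ⟨fsW1 x w, fsW2 x w, fsW4 x w, fsW5 x w, ?_, ?_, ?_, ?_, ?_⟩
  · have hlt : w.idxOf x < w.length := List.idxOf_lt_length_iff.2 hx
    have h12 : fsW1 x w ++ fsW2 x w = w.take (w.idxOf x) := by
      rw [fsW1, fsW2, ← List.reverse_append, List.takeWhile_append_dropWhile,
        List.reverse_reverse]
    have h45 : fsW4 x w ++ fsW5 x w = w.drop (w.idxOf x + 1) :=
      List.takeWhile_append_dropWhile
    conv_lhs => rw [← List.take_append_drop (w.idxOf x) w]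
    rw [List.drop_eq_getElem_cons hlt, List.getElem_idxOf hlt, ← h12, ← h45]
    simp
  · rw [fsW1]
    intro a ha
    rw [List.getLast?_reverse] at ha
    simpa using head?_dropWhile _ _ a ha
  · intro a ha
    rw [fsW2, List.mem_reverse] at ha
    simpa using List.mem_takeWhile_imp ha
  · intro a ha
    simpa using List.mem_takeWhile_imp ha
  · intro a ha
    simpa using head?_dropWhile _ _ a ha

lemma fs_decomp (x : ℕ) (w : List ℕ) (hx : x ∈ w) :
    w = fsW1 x w ++ fsW2 x w ++ [x] ++ fsW4 x w ++ fsW5 x w := by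
  have hlt : w.idxOf x < w.length := List.idxOf_lt_length_iff.2 hx
  have h12 : fsW1 x w ++ fsW2 x w = w.take (w.idxOf x) := by
    rw [fsW1, fsW2, ← List.reverse_append, List.takeWhile_append_dropWhile,
      List.reverse_reverse]
  have h45 : fsW4 x w ++ fsW5 x w = w.drop (w.idxOf x + 1) :=
    List.takeWhile_append_dropWhile
  conv_lhs => rw [← List.take_append_drop (w.idxOf x) w]
  rw [List.drop_eq_getElem_cons hlt, List.getElem_idxOf hlt, ← h12, ← h45]
  simp

lemma dualFS_perm (x : ℕ) (w : List ℕ) : (dualFS x w).Perm w := by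
  by_cases hx : x ∈ w
  · rw [dualFS, if_pos hx]
    conv_rhs => rw [fs_decomp x w hx]
    rw [List.perm_iff_count]
    intro a
    simp only [List.count_append]
    omega
  · rw [dualFS, if_neg hx]

private lemma head?_append_left {l l' : List ℕ} (h : l ≠ []) : (l ++ l').head? = l.head? := by
  cases l with
  | nil => exact absurd rfl h
  | cons a t => rfl

private lemma getLast?_append_right {l l' : List ℕ} (h : l' ≠ []) :
    (l ++ l').getLast? = l'.getLast? := by
  rw [List.getLast?_append]
  cases hls : l'.getLast? with
  | none => exact absurd (List.getLast?_eq_none_iff.1 hls) h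
  | some b => rfl

private lemma last_app {P : ℕ → Prop} {l l' : List ℕ}
    (h' : ∀ a ∈ l'.getLast?, P a) (h : l' = [] → ∀ a ∈ l.getLast?, P a) :
    ∀ a ∈ (l ++ l').getLast?, P a := by
  rcases eq_or_ne l' [] with rfl | hne
  · simpa using h rfl
  · rw [getLast?_append_right hne]; exact h'

private lemma head_app {P : ℕ → Prop} {l l' : List ℕ}
    (h : ∀ a ∈ l.head?, P a) (h' : l = [] → ∀ a ∈ l'.head?, P a) :
    ∀ a ∈ (l ++ l').head?, P a := by
  rcases eq_or_ne l [] with rfl | hne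
  · simpa using h' rfl
  · rw [head?_append_left hne]; exact h

private lemma last_cons {P : ℕ → Prop} {c : ℕ} {A : List ℕ} (hc : P c)
    (hA : ∀ a ∈ A.getLast?, P a) : ∀ a ∈ (c :: A).getLast?, P a := by
  rcases List.eq_nil_or_concat A with rfl | ⟨A', b, rfl⟩
  · simpa using hc
  · rw [List.concat_eq_append] at hA ⊢
    rw [show c :: (A' ++ [b]) = (c :: A') ++ [b] from rfl, List.getLast?_concat]
    intro a ha
    have hb : b ∈ (A' ++ [b]).getLast? := by rw [List.getLast?_concat]; rfl
    cases ha
    exact hA b hb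

lemma key_core (x y : ℕ) (hxy : x < y) (w : List ℕ) (hnd : w.Nodup)
    (hxw : x ∈ w) (hyw : y ∈ w) :
    dualFS x (dualFS y w) = dualFS y (dualFS x w) := by
  obtain ⟨Y1, Y2, Y4, Y5, hw, hY1, hY2, hY4, hY5⟩ := fs_exists y w hyw
  have hcx : w.count x = 1 := List.count_eq_one_of_mem hnd hxw
  have hcy : w.count y = 1 := List.count_eq_one_of_mem hnd hyw
  rw [hw] at hcx hcy
  have hxy' : x ≠ y := hxy.ne
  simp only [List.count_append, List.count_singleton, List.count_cons, List.count_nil,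
    beq_iff_eq, if_neg (Ne.symm hxy'), if_pos rfl, eq_self_iff_true, if_true] at hcx hcy
  have hyY1 : y ∉ Y1 := List.count_eq_zero.1 (by omega)
  have hxmem : x ∈ Y1 ∨ x ∈ Y2 ∨ x ∈ Y4 ∨ x ∈ Y5 := by
    rw [hw] at hxw
    simp only [List.mem_append, List.mem_singleton] at hxw
    tauto
  have e1 : dualFS y w = Y1 ++ Y4 ++ [y] ++ Y2 ++ Y5 := by
    rw [hw]; exact dualFS_spec y Y1 Y2 Y4 Y5 hY1 hY2 hY4 hY5 hyY1
  rcases hxmem with hx1 | hx2 | hx4 | hx5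
  · -- x ∈ Y1
    obtain ⟨A, u, v, B, hdec, hA, hu, hv, hB⟩ := fs_exists x Y1 hx1
    rw [hdec] at hcx
    simp only [List.count_append, List.count_singleton, List.count_cons,
      List.count_nil, beq_iff_eq, if_pos rfl, eq_self_iff_true, if_true] at hcx
    have hxA : x ∉ A := List.count_eq_zero.1 (by omega)
    have hyA : y ∉ A := fun h => hyY1 (by rw [hdec]; simp [h])
    have hyB : y ∉ B := fun h => hyY1 (by rw [hdec]; simp [h])
    have hBne : B ≠ [] := by
      rintro rfl
      have h1 := hY1
      rw [hdec] at h1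
      rcases List.eq_nil_or_concat v with rfl | ⟨v', b, rfl⟩
      · have := h1 x (by
          rw [show A ++ u ++ [x] ++ [] ++ [] = (A ++ u) ++ [x] by simp,
            List.getLast?_concat]; rfl)
        omega
      · rw [List.concat_eq_append] at h1 hv
        have hbv : b ∈ v' ++ [b] := by simp
        have h2 := h1 b (by
          rw [show A ++ u ++ [x] ++ (v' ++ [b]) ++ [] = ((A ++ u) ++ [x]) ++ (v' ++ [b])
            by simp, getLast?_append_right (by simp), List.getLast?_concat]; rfl)
        exact h2 (lt_trans (hv b hbv) hxy)
    have hBlast : ∀ a ∈ B.getLast?, ¬ a < y := by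
      intro a ha
      refine hY1 a ?_
      rw [hdec, getLast?_append_right hBne]
      exact ha
    have hB1 : ∀ a ∈ (B ++ (Y2 ++ ([y] ++ (Y4 ++ Y5)))).head?, ¬ a < x := by
      rw [head?_append_left hBne]; exact hB
    have hB2 : ∀ a ∈ (B ++ (Y4 ++ ([y] ++ (Y2 ++ Y5)))).head?, ¬ a < x := by
      rw [head?_append_left hBne]; exact hB
    have hA1 : ∀ a ∈ ((A ++ v ++ [x] ++ u) ++ B).getLast?, ¬ a < y := by
      rw [getLast?_append_right hBne]; exact hBlast
    have f1 : dualFS x w = A ++ v ++ [x] ++ u ++ (B ++ (Y2 ++ ([y] ++ (Y4 ++ Y5)))) := by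
      rw [show w = A ++ u ++ [x] ++ v ++ (B ++ (Y2 ++ ([y] ++ (Y4 ++ Y5)))) by
        rw [hw, hdec]; simp [List.append_assoc]]
      exact dualFS_spec x _ u v _ hA hu hv hB1 hxA
    have f2 : dualFS y (A ++ v ++ [x] ++ u ++ (B ++ (Y2 ++ ([y] ++ (Y4 ++ Y5)))))
        = ((A ++ v ++ [x] ++ u) ++ B) ++ Y4 ++ [y] ++ Y2 ++ Y5 := by
      rw [show A ++ v ++ [x] ++ u ++ (B ++ (Y2 ++ ([y] ++ (Y4 ++ Y5))))
          = ((A ++ v ++ [x] ++ u) ++ B) ++ Y2 ++ [y] ++ Y4 ++ Y5 by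
        simp [List.append_assoc]]
      refine dualFS_spec y _ Y2 Y4 Y5 hA1 hY2 hY4 hY5 ?_
      intro hmem
      simp only [List.mem_append, List.mem_singleton] at hmem
      rcases hmem with ((((h | h) | h) | h) | h)
      · exact hyA h
      · exact absurd (hv y h) (by omega)
      · exact (Ne.symm hxy') h
      · exact absurd (hu y h) (by omega)
      · exact hyB h
    have e2 : dualFS x (Y1 ++ Y4 ++ [y] ++ Y2 ++ Y5)
        = A ++ v ++ [x] ++ u ++ (B ++ (Y4 ++ ([y] ++ (Y2 ++ Y5)))) := by
      rw [show Y1 ++ Y4 ++ [y] ++ Y2 ++ Y5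
          = A ++ u ++ [x] ++ v ++ (B ++ (Y4 ++ ([y] ++ (Y2 ++ Y5)))) by
        rw [hdec]; simp [List.append_assoc]]
      exact dualFS_spec x _ u v _ hA hu hv hB2 hxA
    rw [e1, e2, f1, f2]
    simp [List.append_assoc]
  · -- x ∈ Y2
    obtain ⟨A, u, v, B, hdec, hA, hu, hv, hB⟩ := fs_exists x Y2 hx2
    rw [hdec] at hcx
    simp only [List.count_append, List.count_singleton, List.count_cons,
      List.count_nil, beq_iff_eq, if_pos rfl, eq_self_iff_true, if_true] at hcx
    have hxY1 : x ∉ Y1 := List.count_eq_zero.1 (by omega)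
    have hxY4 : x ∉ Y4 := List.count_eq_zero.1 (by omega)
    have hxA : x ∉ A := List.count_eq_zero.1 (by omega)
    have hY2' : ∀ a, (a ∈ A ∨ a ∈ u ∨ a ∈ v ∨ a ∈ B) → a < y := by
      intro a ha
      refine hY2 a ?_
      rw [hdec]; simp only [List.mem_append, List.mem_singleton]; tauto
    have hAx : ∀ a ∈ (Y1 ++ Y4 ++ [y] ++ A).getLast?, ¬ a < x :=
      last_app hA (fun _ a ha => by
        rw [List.getLast?_concat] at ha
        simp only [Option.mem_def, Option.some.injEq] at ha
        omega)
    have hBx : ∀ a ∈ (B ++ Y5).head?, ¬ a < x :=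
      head_app hB (fun _ a ha => by have := hY5 a ha; omega)
    have hA2 : ∀ a ∈ (Y1 ++ A).getLast?, ¬ a < x :=
      last_app hA (fun _ a ha => by have := hY1 a ha; omega)
    have hB2 : ∀ a ∈ (B ++ ([y] ++ (Y4 ++ Y5))).head?, ¬ a < x :=
      head_app hB (fun _ a ha => by
        simp only [List.singleton_append, List.head?_cons, Option.mem_def,
          Option.some.injEq] at ha
        omega)
    have e2 : dualFS x (Y1 ++ Y4 ++ [y] ++ Y2 ++ Y5)
        = (Y1 ++ Y4 ++ [y] ++ A) ++ v ++ [x] ++ u ++ (B ++ Y5) := by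
      rw [show Y1 ++ Y4 ++ [y] ++ Y2 ++ Y5
          = (Y1 ++ Y4 ++ [y] ++ A) ++ u ++ [x] ++ v ++ (B ++ Y5) by
        rw [hdec]; simp [List.append_assoc]]
      exact dualFS_spec x _ u v _ hAx hu hv hBx
        (by simp only [List.mem_append, List.mem_singleton]; push_neg
            exact ⟨⟨⟨hxY1, hxY4⟩, hxy'⟩, hxA⟩)
    have f1 : dualFS x w = (Y1 ++ A) ++ v ++ [x] ++ u ++ (B ++ ([y] ++ (Y4 ++ Y5))) := by
      rw [show w = (Y1 ++ A) ++ u ++ [x] ++ v ++ (B ++ ([y] ++ (Y4 ++ Y5))) by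
        rw [hw, hdec]; simp [List.append_assoc]]
      exact dualFS_spec x _ u v _ hA2 hu hv hB2 (by simp [hxY1, hxA])
    have f2 : dualFS y ((Y1 ++ A) ++ v ++ [x] ++ u ++ (B ++ ([y] ++ (Y4 ++ Y5))))
        = Y1 ++ Y4 ++ [y] ++ (A ++ v ++ [x] ++ u ++ B) ++ Y5 := by
      rw [show (Y1 ++ A) ++ v ++ [x] ++ u ++ (B ++ ([y] ++ (Y4 ++ Y5)))
          = Y1 ++ (A ++ v ++ [x] ++ u ++ B) ++ [y] ++ Y4 ++ Y5 by
        simp [List.append_assoc]]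
      refine dualFS_spec y Y1 _ Y4 Y5 hY1 ?_ hY4 hY5 hyY1
      intro a ha
      simp only [List.mem_append, List.mem_singleton] at ha
      rcases ha with (((h | h) | rfl) | h) | h
      · exact hY2' a (Or.inl h)
      · exact hY2' a (Or.inr (Or.inr (Or.inl h)))
      · exact hxy
      · exact hY2' a (Or.inr (Or.inl h))
      · exact hY2' a (Or.inr (Or.inr (Or.inr h)))
    rw [e1, e2, f1, f2]
    simp [List.append_assoc]
  · -- x ∈ Y4
    obtain ⟨A, u, v, B, hdec, hA, hu, hv, hB⟩ := fs_exists x Y4 hx4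
    rw [hdec] at hcx
    simp only [List.count_append, List.count_singleton, List.count_cons,
      List.count_nil, beq_iff_eq, if_pos rfl, eq_self_iff_true, if_true] at hcx
    have hxY1 : x ∉ Y1 := List.count_eq_zero.1 (by omega)
    have hxY2 : x ∉ Y2 := List.count_eq_zero.1 (by omega)
    have hxA : x ∉ A := List.count_eq_zero.1 (by omega)
    have hY4' : ∀ a, (a ∈ A ∨ a ∈ u ∨ a ∈ v ∨ a ∈ B) → a < y := by
      intro a ha
      refine hY4 a ?_
      rw [hdec]; simp only [List.mem_append, List.mem_singleton]; tauto
    have hA1 : ∀ a ∈ (Y1 ++ A).getLast?, ¬ a < x :=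
      last_app hA (fun _ a ha => by have := hY1 a ha; omega)
    have hB1 : ∀ a ∈ (B ++ ([y] ++ (Y2 ++ Y5))).head?, ¬ a < x :=
      head_app hB (fun _ a ha => by
        simp only [List.singleton_append, List.head?_cons, Option.mem_def,
          Option.some.injEq] at ha
        omega)
    have hA2 : ∀ a ∈ ((Y1 ++ Y2) ++ ([y] ++ A)).getLast?, ¬ a < x := by
      refine last_app ?_ (fun h => absurd h (by simp))
      rw [List.singleton_append]
      exact last_cons (by omega) hA
    have hB2 : ∀ a ∈ (B ++ Y5).head?, ¬ a < x :=
      head_app hB (fun _ a ha => by have := hY5 a ha; omega)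
    have e2 : dualFS x (Y1 ++ Y4 ++ [y] ++ Y2 ++ Y5)
        = (Y1 ++ A) ++ v ++ [x] ++ u ++ (B ++ ([y] ++ (Y2 ++ Y5))) := by
      rw [show Y1 ++ Y4 ++ [y] ++ Y2 ++ Y5
          = (Y1 ++ A) ++ u ++ [x] ++ v ++ (B ++ ([y] ++ (Y2 ++ Y5))) by
        rw [hdec]; simp [List.append_assoc]]
      exact dualFS_spec x _ u v _ hA1 hu hv hB1 (by simp [hxY1, hxA])
    have f1 : dualFS x w = ((Y1 ++ Y2) ++ ([y] ++ A)) ++ v ++ [x] ++ u ++ (B ++ Y5) := by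
      rw [show w = ((Y1 ++ Y2) ++ ([y] ++ A)) ++ u ++ [x] ++ v ++ (B ++ Y5) by
        rw [hw, hdec]; simp [List.append_assoc]]
      refine dualFS_spec x _ u v _ hA2 hu hv hB2 ?_
      intro hmem
      simp only [List.mem_append, List.mem_singleton] at hmem
      rcases hmem with (h | h) | (h | h)
      · exact hxY1 h
      · exact hxY2 h
      · exact hxy' h
      · exact hxA h
    have f2 : dualFS y (((Y1 ++ Y2) ++ ([y] ++ A)) ++ v ++ [x] ++ u ++ (B ++ Y5))
        = Y1 ++ (A ++ v ++ [x] ++ u ++ B) ++ [y] ++ Y2 ++ Y5 := by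
      rw [show ((Y1 ++ Y2) ++ ([y] ++ A)) ++ v ++ [x] ++ u ++ (B ++ Y5)
          = Y1 ++ Y2 ++ [y] ++ (A ++ v ++ [x] ++ u ++ B) ++ Y5 by
        simp [List.append_assoc]]
      refine dualFS_spec y Y1 Y2 _ Y5 hY1 hY2 ?_ hY5 hyY1
      intro a ha
      simp only [List.mem_append, List.mem_singleton] at ha
      rcases ha with (((h | h) | rfl) | h) | h
      · exact hY4' a (Or.inl h)
      · exact hY4' a (Or.inr (Or.inr (Or.inl h)))
      · exact hxy
      · exact hY4' a (Or.inr (Or.inl h))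
      · exact hY4' a (Or.inr (Or.inr (Or.inr h)))
    rw [e1, e2, f1, f2]
    simp [List.append_assoc]
  · -- x ∈ Y5
    obtain ⟨A, u, v, B, hdec, hA, hu, hv, hB⟩ := fs_exists x Y5 hx5
    rw [hdec] at hcx
    simp only [List.count_append, List.count_singleton, List.count_cons,
      List.count_nil, beq_iff_eq, if_pos rfl, eq_self_iff_true, if_true] at hcx
    have hxY1 : x ∉ Y1 := List.count_eq_zero.1 (by omega)
    have hxY2 : x ∉ Y2 := List.count_eq_zero.1 (by omega)
    have hxY4 : x ∉ Y4 := List.count_eq_zero.1 (by omega)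
    have hxA : x ∉ A := List.count_eq_zero.1 (by omega)
    have hAne : A ≠ [] := by
      rintro rfl
      have h5 := hY5
      rw [hdec] at h5
      rcases u with _ | ⟨c, u'⟩
      · have := h5 x (by simp)
        omega
      · have h6 := h5 c (by simp)
        have := hu c (by simp)
        omega
    have hAhead : ∀ a ∈ A.head?, ¬ a < y := by
      intro a ha
      refine hY5 a ?_
      rw [hdec, show A ++ u ++ [x] ++ v ++ B = A ++ (u ++ ([x] ++ (v ++ B))) from by simp,
        head?_append_left hAne]
      exact ha
    have hA1 : ∀ a ∈ ((Y1 ++ Y2 ++ [y] ++ Y4) ++ A).getLast?, ¬ a < x := by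
      rw [getLast?_append_right hAne]; exact hA
    have hA2 : ∀ a ∈ ((Y1 ++ Y4 ++ [y] ++ Y2) ++ A).getLast?, ¬ a < x := by
      rw [getLast?_append_right hAne]; exact hA
    have hW5 : ∀ a ∈ (A ++ (v ++ ([x] ++ (u ++ B)))).head?, ¬ a < y := by
      rw [head?_append_left hAne]; exact hAhead
    have f1 : dualFS x w = ((Y1 ++ Y2 ++ [y] ++ Y4) ++ A) ++ v ++ [x] ++ u ++ B := by
      rw [show w = ((Y1 ++ Y2 ++ [y] ++ Y4) ++ A) ++ u ++ [x] ++ v ++ B by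
        rw [hw, hdec]; simp [List.append_assoc]]
      refine dualFS_spec x _ u v _ hA1 hu hv hB ?_
      intro hmem
      simp only [List.mem_append, List.mem_singleton] at hmem
      rcases hmem with (((h | h) | h) | h) | h
      · exact hxY1 h
      · exact hxY2 h
      · exact hxy' h
      · exact hxY4 h
      · exact hxA h
    have f2 : dualFS y (((Y1 ++ Y2 ++ [y] ++ Y4) ++ A) ++ v ++ [x] ++ u ++ B)
        = Y1 ++ Y4 ++ [y] ++ Y2 ++ (A ++ (v ++ ([x] ++ (u ++ B)))) := by
      rw [show ((Y1 ++ Y2 ++ [y] ++ Y4) ++ A) ++ v ++ [x] ++ u ++ B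
          = Y1 ++ Y2 ++ [y] ++ Y4 ++ (A ++ (v ++ ([x] ++ (u ++ B)))) by
        simp [List.append_assoc]]
      exact dualFS_spec y Y1 Y2 Y4 _ hY1 hY2 hY4 hW5 hyY1
    have e2 : dualFS x (Y1 ++ Y4 ++ [y] ++ Y2 ++ Y5)
        = ((Y1 ++ Y4 ++ [y] ++ Y2) ++ A) ++ v ++ [x] ++ u ++ B := by
      rw [show Y1 ++ Y4 ++ [y] ++ Y2 ++ Y5
          = ((Y1 ++ Y4 ++ [y] ++ Y2) ++ A) ++ u ++ [x] ++ v ++ B by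
        rw [hdec]; simp [List.append_assoc]]
      refine dualFS_spec x _ u v _ hA2 hu hv hB ?_
      intro hmem
      simp only [List.mem_append, List.mem_singleton] at hmem
      rcases hmem with (((h | h) | h) | h) | h
      · exact hxY1 h
      · exact hxY4 h
      · exact hxy' h
      · exact hxY2 h
      · exact hxA h
    rw [e1, e2, f1, f2]
    simp [List.append_assoc]


/-- the dual Foata–Strehl maps commute:
`φ_x(φ_y(π)) = φ_y(φ_x(π))` for all `x, y ∈ [n]` and `π ∈ S_n`. -/
theorem dualFS_comm (n x y : ℕ) (hx : x ∈ Finset.Icc 1 n) (hy : y ∈ Finset.Icc 1 n)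
    (π : List ℕ) (hπ : IsPermOf n π) :
    dualFS x (dualFS y π) = dualFS y (dualFS x π) := by
  have hnd : π.Nodup := hπ.nodup_iff.2 (List.nodup_range' (s := 1) (n := n))
  by_cases hyw : y ∈ π
  · by_cases hxw : x ∈ π
    · rcases lt_trichotomy x y with h | rfl | h
      · exact key_core x y h π hnd hxw hyw
      · rfl
      · exact (key_core y x h π hnd hyw hxw).symm
    · have h1 : dualFS x π = π := by rw [dualFS, if_neg hxw]
      have h2 : x ∉ dualFS y π := fun h => hxw ((dualFS_perm y π).mem_iff.1 h)
      rw [h1, dualFS, if_neg h2]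
  · have h1 : dualFS y π = π := by rw [dualFS, if_neg hyw]
    have h2 : y ∉ dualFS x π := fun h => hyw ((dualFS_perm x π).mem_iff.1 h)
    have h3 : dualFS y (dualFS x π) = dualFS x π := by rw [dualFS, if_neg h2]
    rw [h1, h3]
end

section
/- For any subset S ⊆ [n] and any permutation π ∈ S_n, the dual Foata–Strehl action preserves pinnacle sets: Pin(π) = Pin(φ_S(π)). -/
namespace FSPin

/-- head of `w` as `ℕ∞`, with default `r`. -/
def headE (w : List ℕ) (r : ℕ∞) : ℕ∞ :=
  match w.head? with
  | some a => (a : ℕ∞)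
  | none => r

/-- last of `w` as `ℕ∞`, with default `l`. -/
def lastE (w : List ℕ) (l : ℕ∞) : ℕ∞ :=
  match w.getLast? with
  | some a => (a : ℕ∞)
  | none => l

lemma headE_nil (r : ℕ∞) : headE [] r = r := rfl

lemma headE_cons (a : ℕ) (t : List ℕ) (r : ℕ∞) : headE (a :: t) r = (a : ℕ∞) := rfl

lemma lastE_nil (l : ℕ∞) : lastE [] l = l := rfl

lemma lastE_eq (w : List ℕ) (l : ℕ∞) : lastE w l = headE w.reverse l := by
  simp [lastE, headE, List.head?_reverse]

lemma headE_append (u v : List ℕ) (r : ℕ∞) :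
    headE (u ++ v) r = headE u (headE v r) := by
  cases u <;> simp [headE]

lemma lastE_append (u v : List ℕ) (l : ℕ∞) :
    lastE (u ++ v) l = lastE v (lastE u l) := by
  simp [lastE_eq, List.reverse_append, headE_append]

lemma lastE_singleton (a : ℕ) (l : ℕ∞) : lastE [a] l = (a : ℕ∞) := rfl

lemma headE_singleton (a : ℕ) (r : ℕ∞) : headE [a] r = (a : ℕ∞) := rfl

/-- Pinnacle set of `w` with left boundary `l` and right boundary `r`, recursively. -/
def pinn : ℕ∞ → List ℕ → ℕ∞ → Finset ℕ
  | _, [], _ => ∅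
  | l, a :: t, r =>
    (if l < (a : ℕ∞) ∧ headE t r < (a : ℕ∞) then {a} else ∅) ∪ pinn (a : ℕ∞) t r

lemma lastE_cons (a : ℕ) (u : List ℕ) (l : ℕ∞) :
    lastE (a :: u) l = lastE u (a : ℕ∞) := by
  rw [← List.singleton_append, lastE_append, lastE_singleton]

lemma pinn_append (u v : List ℕ) (l r : ℕ∞) :
    pinn l (u ++ v) r = pinn l u (headE v r) ∪ pinn (lastE u l) v r := by
  induction u generalizing l with
  | nil => simp [pinn, lastE_nil]
  | cons a u ih =>
    simp only [List.cons_append, pinn, ih, headE_append, lastE_cons, List.append_eq]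
    rw [Finset.union_assoc]

lemma pinn_congr {u : List ℕ} {l l' r r' : ℕ∞}
    (hl : ∀ a : ℕ, u.head? = some a → (l < (a : ℕ∞) ↔ l' < (a : ℕ∞)))
    (hr : ∀ a : ℕ, u.getLast? = some a → (r < (a : ℕ∞) ↔ r' < (a : ℕ∞))) :
    pinn l u r = pinn l' u r' := by
  induction u generalizing l l' with
  | nil => rfl
  | cons a t ih =>
    have h1 : l < (a : ℕ∞) ↔ l' < (a : ℕ∞) := hl a rfl
    have h2 : headE t r < (a : ℕ∞) ↔ headE t r' < (a : ℕ∞) := by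
      cases t with
      | nil => simpa [headE_nil] using hr a rfl
      | cons b t' => simp [headE_cons]
    have h3 : ∀ c : ℕ, t.getLast? = some c → (r < (c : ℕ∞) ↔ r' < (c : ℕ∞)) := by
      intro c hc
      refine hr c ?_
      cases t with
      | nil => simp at hc
      | cons b t' => rw [List.getLast?_cons_cons]; exact hc
    rw [pinn, pinn, ih (fun c _ => Iff.rfl) h3]
    congr 1
    rw [if_congr (and_congr h1 h2) rfl rfl]

lemma pinn_singleton (x : ℕ) (l r : ℕ∞) :
    pinn l [x] r = (if l < (x : ℕ∞) ∧ r < (x : ℕ∞) then {x} else ∅) := by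
  rw [pinn, pinn, headE_nil, Finset.union_empty]

/- ### relating `pinnSet` to `pinn` -/

lemma ext_zero (w : List ℕ) : ext w 0 = ⊤ := by simp [ext]

lemma ext_cons_one (a : ℕ) (t : List ℕ) : ext (a :: t) 1 = (a : ℕ∞) := by
  simp [ext]

lemma ext_cons_succ (a : ℕ) (t : List ℕ) (j : ℕ) (hj : 1 ≤ j) :
    ext (a :: t) (j + 1) = ext t j := by
  obtain ⟨k, rfl⟩ : ∃ k, j = k + 1 := ⟨j - 1, by omega⟩
  unfold ext
  by_cases h : k + 1 ≤ t.length
  · rw [if_pos (by simp; omega), if_pos (by omega)]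
    simp
  · rw [if_neg (by simp; omega), if_neg (by omega)]

/-- `pinnSet` with general left boundary. -/
def pinnB (l : ℕ∞) (w : List ℕ) : Finset ℕ :=
  ((Finset.Icc 1 w.length).filter fun i =>
      (if i = 1 then l else ext w (i - 1)) < ext w i ∧ ext w (i + 1) < ext w i).image
    fun i => w.getD (i - 1) 0

lemma pinnSet_eq_pinnB (w : List ℕ) : pinnSet w = pinnB ⊤ w := by
  unfold pinnSet pinnB
  congr 1
  apply Finset.filter_congr
  intro i hi
  simp only [Finset.mem_Icc] at hi
  by_cases h : i = 1
  · subst h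
    simp [ext_zero]
  · rw [if_neg h]

lemma pinnB_cons (l : ℕ∞) (a : ℕ) (t : List ℕ) :
    pinnB l (a :: t) =
      (if l < (a : ℕ∞) ∧ ext (a :: t) 2 < (a : ℕ∞) then {a} else ∅) ∪ pinnB (a : ℕ∞) t := by
  ext y
  simp only [pinnB, Finset.mem_union, Finset.mem_image, Finset.mem_filter, Finset.mem_Icc,
    List.length_cons]
  constructor
  · rintro ⟨i, ⟨⟨hi1, hi2⟩, hc1, hc2⟩, rfl⟩
    rcases Nat.eq_or_lt_of_le hi1 with h1 | h1
    · -- i = 1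
      subst h1
      left
      rw [if_pos rfl, ext_cons_one] at hc1
      rw [ext_cons_one] at hc2
      rw [if_pos ⟨hc1, hc2⟩]
      simp
    · -- i ≥ 2
      right
      have e0 : ext (a :: t) i = ext t (i - 1) := by
        have := ext_cons_succ a t (i - 1) (by omega)
        rwa [show i - 1 + 1 = i by omega] at this
      have e2 : ext (a :: t) (i + 1) = ext t i := ext_cons_succ a t i (by omega)
      have e3 : ext t ((i - 1) + 1) = ext t i := by rw [show i - 1 + 1 = i by omega]
      refine ⟨i - 1, ⟨⟨by omega, by omega⟩, ?_, ?_⟩, ?_⟩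
      · rw [← e0]
        by_cases h2 : i = 2
        · subst h2
          rw [if_pos rfl, ← ext_cons_one a t]
          rw [if_neg (by omega)] at hc1
          exact hc1
        · rw [if_neg (by omega)]
          rw [if_neg (by omega)] at hc1
          have e4 : ext (a :: t) (i - 1) = ext t (i - 1 - 1) := by
            have := ext_cons_succ a t (i - 2) (by omega)
            rw [show i - 2 + 1 = i - 1 by omega] at this
            rw [this, show i - 2 = i - 1 - 1 by omega]
          rwa [e4] at hc1
      · rw [e3, ← e2, ← e0]
        exact hc2
      · obtain ⟨k, rfl⟩ : ∃ k, i = k + 2 := ⟨i - 2, by omega⟩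
        simp [List.getD_cons_succ]
  · rintro (hy | ⟨j, ⟨⟨hj1, hj2⟩, c1, c2⟩, rfl⟩)
    · by_cases hc : l < (a : ℕ∞) ∧ ext (a :: t) 2 < (a : ℕ∞)
      · rw [if_pos hc, Finset.mem_singleton] at hy
        refine ⟨1, ⟨⟨le_rfl, by omega⟩, ?_, ?_⟩, ?_⟩
        · rw [if_pos rfl, ext_cons_one]
          exact hc.1
        · rw [ext_cons_one]
          exact hc.2
        · simpa using hy.symm
      · rw [if_neg hc] at hy
        simp at hy
    · have e0 : ext (a :: t) (j + 1) = ext t j := ext_cons_succ a t j hj1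
      have e2 : ext (a :: t) (j + 2) = ext t (j + 1) := ext_cons_succ a t (j + 1) (by omega)
      refine ⟨j + 1, ⟨⟨by omega, by omega⟩, ?_, ?_⟩, ?_⟩
      · rw [if_neg (by omega), e0]
        by_cases h2 : j = 1
        · subst h2
          rw [if_pos rfl] at c1
          rw [show (1 : ℕ) + 1 - 1 = 1 by omega, ext_cons_one]
          exact c1
        · rw [if_neg h2] at c1
          have e4 : ext (a :: t) (j + 1 - 1) = ext t (j - 1) := by
            have := ext_cons_succ a t (j - 1) (by omega)
            rw [show j - 1 + 1 = j by omega] at this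
            rw [show j + 1 - 1 = j by omega, this]
          rwa [e4]
      · rw [show j + 1 + 1 = j + 2 by omega, e2, e0]
        exact c2
      · obtain ⟨k, rfl⟩ : ∃ k, j = k + 1 := ⟨j - 1, by omega⟩
        simp [List.getD_cons_succ]

lemma pinnB_eq_pinn (l : ℕ∞) (w : List ℕ) : pinnB l w = pinn l w ⊤ := by
  induction w generalizing l with
  | nil => simp [pinnB, pinn]
  | cons a t ih =>
    rw [pinnB_cons, ih, pinn]
    have h : ext (a :: t) 2 = headE t ⊤ := by
      cases t with
      | nil => simp [ext, headE_nil]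
      | cons b t' => simp [ext, headE_cons]
    rw [h]

lemma pinnSet_eq_pinn (w : List ℕ) : pinnSet w = pinn ⊤ w ⊤ := by
  rw [pinnSet_eq_pinnB, pinnB_eq_pinn]

/- ### the factorization -/

lemma fs_decomp {x : ℕ} {w : List ℕ} (h : x ∈ w) :
    w = fsW1 x w ++ fsW2 x w ++ [x] ++ fsW4 x w ++ fsW5 x w := by
  have hlt : w.idxOf x < w.length := List.idxOf_lt_length_iff.2 h
  have h1 : w.take (w.idxOf x) = fsW1 x w ++ fsW2 x w := by
    unfold fsW1 fsW2
    rw [← List.reverse_append, List.takeWhile_append_dropWhile, List.reverse_reverse]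
  have h2 : w.drop (w.idxOf x + 1) = fsW4 x w ++ fsW5 x w :=
    List.takeWhile_append_dropWhile.symm
  conv_lhs => rw [← List.take_append_drop (w.idxOf x) w,
    List.drop_eq_getElem_cons hlt, List.getElem_idxOf hlt, h1]
  rw [h2]
  simp

lemma mem_fsW2_lt {x : ℕ} {w : List ℕ} : ∀ a ∈ fsW2 x w, a < x := by
  intro a ha
  rw [fsW2, List.mem_reverse] at ha
  simpa using List.mem_takeWhile_imp ha

lemma mem_fsW4_lt {x : ℕ} {w : List ℕ} : ∀ a ∈ fsW4 x w, a < x := by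
  intro a ha
  simpa using List.mem_takeWhile_imp ha

lemma fsW1_getLast {x : ℕ} {w : List ℕ} {e : ℕ} (he : (fsW1 x w).getLast? = some e) :
    x ≤ e := by
  rw [fsW1, List.getLast?_reverse] at he
  have := List.head?_dropWhile_not (fun a => decide (a < x)) (w.take (w.idxOf x)).reverse
  rw [he] at this
  simpa using this

lemma fsW5_head {x : ℕ} {w : List ℕ} {f : ℕ} (hf : (fsW5 x w).head? = some f) :
    x ≤ f := by
  have := List.head?_dropWhile_not (fun a => decide (a < x)) (w.drop (w.idxOf x + 1))
  rw [fsW5] at hf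
  rw [hf] at this
  simpa using this

/- ### comparison helpers -/

lemma headE_le {C : List ℕ} {x : ℕ} (h : ∀ a ∈ C, a < x) {r : ℕ∞} (hr : r ≤ (x : ℕ∞)) :
    headE C r ≤ (x : ℕ∞) := by
  cases C with
  | nil => exact hr
  | cons a t =>
    rw [headE_cons]
    exact_mod_cast (h a List.mem_cons_self).le

lemma lastE_le {B : List ℕ} {x : ℕ} (h : ∀ a ∈ B, a < x) {l : ℕ∞} (hl : l ≤ (x : ℕ∞)) :
    lastE B l ≤ (x : ℕ∞) := by
  unfold lastE
  cases hB : B.getLast? with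
  | none => exact hl
  | some b => simpa using (h b (List.mem_of_mem_getLast? (by simp [hB]))).le

lemma not_lastE_lt {A : List ℕ} {x : ℕ}
    (hA : ∀ e : ℕ, A.getLast? = some e → x < e) {b : ℕ} (hb : b ≤ x) :
    ¬ lastE A ⊤ < (b : ℕ∞) := by
  unfold lastE
  cases hAl : A.getLast? with
  | none => simp
  | some e =>
    have hx := hA e hAl
    simp only [not_lt]
    exact_mod_cast (hb.trans hx.le)

lemma not_headE_lt {D : List ℕ} {x : ℕ}
    (hD : ∀ f : ℕ, D.head? = some f → x < f) {b : ℕ} (hb : b ≤ x) :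
    ¬ headE D ⊤ < (b : ℕ∞) := by
  unfold headE
  cases hDl : D.head? with
  | none => simp
  | some f =>
    have hx := hD f hDl
    simp only [not_lt]
    exact_mod_cast (hb.trans hx.le)

lemma lastE_lt_x_iff {C A : List ℕ} {x : ℕ} (hC : ∀ a ∈ C, a < x)
    (hA : ∀ e : ℕ, A.getLast? = some e → x < e) :
    lastE C (lastE A ⊤) < (x : ℕ∞) ↔ C ≠ [] := by
  rcases C.eq_nil_or_concat with rfl | ⟨C', c, rfl⟩
  · rw [lastE_nil]
    simp only [ne_eq, not_true_eq_false, iff_false, not_not]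
    exact not_lastE_lt hA le_rfl
  · have hlast : (C'.concat c).getLast? = some c := by
      rw [List.concat_eq_append, List.getLast?_concat]
    have hcx : c < x := hC c (by simp)
    unfold lastE
    rw [hlast]
    have hne : C'.concat c ≠ [] := by simp
    simp only [ne_eq, hne, not_false_eq_true, iff_true]
    exact_mod_cast hcx

lemma headE_lt_x_iff {B D : List ℕ} {x : ℕ} (hB : ∀ a ∈ B, a < x)
    (hD : ∀ f : ℕ, D.head? = some f → x < f) :
    headE B (headE D ⊤) < (x : ℕ∞) ↔ B ≠ [] := by
  cases B with
  | nil =>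
    rw [headE_nil]
    simp only [ne_eq, not_true_eq_false, iff_false, not_not]
    exact not_headE_lt hD le_rfl
  | cons b B' =>
    rw [headE_cons]
    have hbx : b < x := hB b List.mem_cons_self
    simp only [ne_eq, List.cons_ne_nil, not_false_eq_true, iff_true]
    exact_mod_cast hbx

/- ### the key computation -/

lemma key (A B C D : List ℕ) (x : ℕ)
    (hB : ∀ a ∈ B, a < x) (hC : ∀ a ∈ C, a < x)
    (hA : ∀ e : ℕ, A.getLast? = some e → x < e)
    (hD : ∀ f : ℕ, D.head? = some f → x < f) :
    pinn ⊤ (A ++ (C ++ ([x] ++ (B ++ D)))) ⊤ = pinn ⊤ (A ++ (B ++ ([x] ++ (C ++ D)))) ⊤ := by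
  simp only [pinn_append, headE_append, lastE_append, headE_singleton, lastE_singleton]
  have e1 : pinn ⊤ A (headE C (x : ℕ∞)) = pinn ⊤ A (headE B (x : ℕ∞)) := by
    refine pinn_congr (fun a _ => Iff.rfl) (fun e he => ?_)
    have hxe : (x : ℕ∞) < (e : ℕ∞) := by exact_mod_cast hA e he
    have h1 : headE C (x : ℕ∞) ≤ (x : ℕ∞) := headE_le hC le_rfl
    have h2 : headE B (x : ℕ∞) ≤ (x : ℕ∞) := headE_le hB le_rfl
    simp [lt_of_le_of_lt h1 hxe, lt_of_le_of_lt h2 hxe]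
  have e2 : pinn (lastE A ⊤) C ((x : ℕ∞)) = pinn ((x : ℕ∞)) C (headE D ⊤) := by
    refine pinn_congr (fun a ha => ?_) (fun a ha => ?_)
    · have hax : a < x := hC a (List.mem_of_mem_head? (by simp [ha]))
      have n1 : ¬ lastE A ⊤ < (a : ℕ∞) := not_lastE_lt hA hax.le
      have n2 : ¬ (x : ℕ∞) < (a : ℕ∞) := by exact_mod_cast hax.le.not_gt
      simp [n1, n2]
    · have hax : a < x := hC a (List.mem_of_mem_getLast? (by simp [ha]))
      have n1 : ¬ (x : ℕ∞) < (a : ℕ∞) := by exact_mod_cast hax.le.not_gt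
      have n2 : ¬ headE D ⊤ < (a : ℕ∞) := not_headE_lt hD hax.le
      simp [n1, n2]
  have e4 : pinn ((x : ℕ∞)) B (headE D ⊤) = pinn (lastE A ⊤) B ((x : ℕ∞)) := by
    refine pinn_congr (fun a ha => ?_) (fun a ha => ?_)
    · have hax : a < x := hB a (List.mem_of_mem_head? (by simp [ha]))
      have n1 : ¬ lastE A ⊤ < (a : ℕ∞) := not_lastE_lt hA hax.le
      have n2 : ¬ (x : ℕ∞) < (a : ℕ∞) := by exact_mod_cast hax.le.not_gt
      simp [n1, n2]
    · have hax : a < x := hB a (List.mem_of_mem_getLast? (by simp [ha]))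
      have n1 : ¬ (x : ℕ∞) < (a : ℕ∞) := by exact_mod_cast hax.le.not_gt
      have n2 : ¬ headE D ⊤ < (a : ℕ∞) := not_headE_lt hD hax.le
      simp [n1, n2]
  have e3 : pinn (lastE C (lastE A ⊤)) [x] (headE B (headE D ⊤))
      = pinn (lastE B (lastE A ⊤)) [x] (headE C (headE D ⊤)) := by
    rw [pinn_singleton, pinn_singleton]
    have i1 := lastE_lt_x_iff hC hA
    have i2 := headE_lt_x_iff hB hD
    have i3 := lastE_lt_x_iff hB hA
    have i4 := headE_lt_x_iff hC hD
    rw [if_congr ((and_congr i1 i2).trans (and_comm.trans (and_congr i3.symm i4.symm))) rfl rfl]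
  have e5 : pinn (lastE B (x : ℕ∞)) D ⊤ = pinn (lastE C (x : ℕ∞)) D ⊤ := by
    refine pinn_congr (fun f hf => ?_) (fun f _ => Iff.rfl)
    have hxf : (x : ℕ∞) < (f : ℕ∞) := by exact_mod_cast hD f hf
    have h1 : lastE B (x : ℕ∞) ≤ (x : ℕ∞) := lastE_le hB le_rfl
    have h2 : lastE C (x : ℕ∞) ≤ (x : ℕ∞) := lastE_le hC le_rfl
    simp [lt_of_le_of_lt h1 hxf, lt_of_le_of_lt h2 hxf]
  rw [e1, e2, e3, e4, e5]
  ac_rfl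

lemma dualFS_perm (x : ℕ) (w : List ℕ) : (dualFS x w).Perm w := by
  by_cases hx : x ∈ w
  · rw [dualFS, if_pos hx]
    conv_rhs => rw [fs_decomp hx]
    refine List.perm_iff_count.2 fun a => ?_
    simp only [List.count_append]
    omega
  · rw [dualFS, if_neg hx]

lemma pinnSet_dualFS (x : ℕ) (w : List ℕ) (hnd : w.Nodup) :
    pinnSet (dualFS x w) = pinnSet w := by
  by_cases hx : x ∈ w
  · have hw := fs_decomp hx
    have hc : w.count x ≤ 1 := List.nodup_iff_count_le_one.1 hnd x
    have hcx : List.count x [x] = 1 := by simp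
    rw [hw] at hc
    simp only [List.count_append, hcx] at hc
    have hxA : x ∉ fsW1 x w := List.count_eq_zero.1 (by omega)
    have hxD : x ∉ fsW5 x w := List.count_eq_zero.1 (by omega)
    have hAe : ∀ e : ℕ, (fsW1 x w).getLast? = some e → x < e := by
      intro e he
      refine lt_of_le_of_ne (fsW1_getLast he) fun h => hxA ?_
      have hmem : e ∈ fsW1 x w := List.mem_of_mem_getLast? (by simp [he])
      rwa [← h] at hmem
    have hDf : ∀ f : ℕ, (fsW5 x w).head? = some f → x < f := by
      intro f hf
      refine lt_of_le_of_ne (fsW5_head hf) fun h => hxD ?_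
      have hmem : f ∈ fsW5 x w := List.mem_of_mem_head? (by simp [hf])
      rwa [← h] at hmem
    rw [dualFS, if_pos hx, pinnSet_eq_pinn, pinnSet_eq_pinn]
    conv_rhs => rw [hw]
    rw [show fsW1 x w ++ fsW4 x w ++ [x] ++ fsW2 x w ++ fsW5 x w
        = fsW1 x w ++ (fsW4 x w ++ ([x] ++ (fsW2 x w ++ fsW5 x w))) by
          simp only [List.append_assoc],
      show fsW1 x w ++ fsW2 x w ++ [x] ++ fsW4 x w ++ fsW5 x w
        = fsW1 x w ++ (fsW2 x w ++ ([x] ++ (fsW4 x w ++ fsW5 x w))) by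
          simp only [List.append_assoc]]
    exact key _ _ _ _ x mem_fsW2_lt mem_fsW4_lt hAe hDf
  · rw [dualFS, if_neg hx]

end FSPin

/-- Theorem 2.3: the dual Foata–Strehl action preserves pinnacle
sets: `Pin(π) = Pin(φ_S(π))` for every `S ⊆ [n]` and `π ∈ S_n`. -/
theorem pinnSet_dualFSFinset (n : ℕ) (S : Finset ℕ) (hS : S ⊆ Finset.Icc 1 n)
    (π : List ℕ) (hπ : IsPermOf n π) :
    pinnSet π = pinnSet (dualFSFinset S π) := by
  have hnd : π.Nodup := hπ.nodup_iff.2 List.nodup_range'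
  suffices h : ∀ (l : List ℕ) (v : List ℕ), v.Nodup →
      (l.foldr dualFS v).Perm v ∧ pinnSet (l.foldr dualFS v) = pinnSet v by
    rw [dualFSFinset, (h S.toList π hnd).2]
  intro l
  induction l with
  | nil => exact fun v _ => ⟨List.Perm.refl v, rfl⟩
  | cons x l ih =>
    intro v hv
    obtain ⟨hp, he⟩ := ih v hv
    have hnd' : (l.foldr dualFS v).Nodup := hp.nodup_iff.2 hv
    exact ⟨(FSPin.dualFS_perm x _).trans hp,
      by rw [List.foldr_cons, FSPin.pinnSet_dualFS x _ hnd', he]⟩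
end

section
/- If π ∈ S_n has pinnacle set P = {p_1, …, p_ℓ}, then for every i ∈ [ℓ], the permutations π and φ_{p_i}(π) have the same number of descents (indices j ∈ [n−1] with π_j > π_{j+1}). -/
/-! ### Auxiliary machinery for counting descents -/

/-- Recursive descent counter. -/
def desc2 : List ℕ → ℕ
  | [] => 0
  | [_] => 0
  | a :: b :: t => (if b < a then 1 else 0) + desc2 (b :: t)

/-- The descent contribution at the junction of two words. -/
def link (u v : List ℕ) : ℕ :=
  match u.getLast?, v.head? with
  | some a, some b => if b < a then 1 else 0
  | _, _ => 0

lemma link_nil_left (v : List ℕ) : link [] v = 0 := rfl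

lemma link_nil_right (u : List ℕ) : link u [] = 0 := by
  cases h : u.getLast? <;> simp [link, h]

lemma link_eval (u v : List ℕ) (hu : u ≠ []) (hv : v ≠ []) :
    link u v = if v.head hv < u.getLast hu then 1 else 0 := by
  unfold link
  rw [List.getLast?_eq_getLast hu, List.head?_eq_head hv]

lemma desc2_cons (a : ℕ) (l : List ℕ) : desc2 (a :: l) = link [a] l + desc2 l := by
  cases l with
  | nil => rfl
  | cons b t => rfl

lemma link_cons_left (a : ℕ) (u v : List ℕ) (hu : u ≠ []) :
    link (a :: u) v = link u v := by
  cases u with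
  | nil => exact absurd rfl hu
  | cons b t => unfold link; rw [List.getLast?_cons_cons]

lemma link_append_right (u v x : List ℕ) (hv : v ≠ []) :
    link u (v ++ x) = link u v := by
  cases v with
  | nil => exact absurd rfl hv
  | cons b t => unfold link; rw [List.head?_append]; rfl

lemma desc2_append (u v : List ℕ) : desc2 (u ++ v) = desc2 u + link u v + desc2 v := by
  induction u with
  | nil => simp [desc2, link_nil_left]
  | cons a u' ih =>
    rw [List.cons_append, desc2_cons, ih, desc2_cons a u']
    have key : link [a] (u' ++ v) + link u' v = link [a] u' + link (a :: u') v := by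
      cases u' with
      | nil => simp [link_nil_left, link_nil_right]
      | cons b t =>
        rw [link_append_right [a] (b :: t) v (by simp),
          link_cons_left a (b :: t) v (by simp)]
    omega

lemma range_shift (m : ℕ) : (Finset.range m).image (· + 1) = Finset.Icc 1 m := by
  ext x
  simp only [Finset.mem_image, Finset.mem_range, Finset.mem_Icc]
  constructor
  · rintro ⟨a, ha, rfl⟩; omega
  · intro h; exact ⟨x - 1, by omega, by omega⟩

lemma range_succ_shift (m : ℕ) :
    Finset.range (m + 1) = insert 0 ((Finset.range m).image (· + 1)) := by
  ext x
  simp only [Finset.mem_range, Finset.mem_insert, Finset.mem_image]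
  constructor
  · intro h
    cases x with
    | zero => left; rfl
    | succ y => right; exact ⟨y, by omega, rfl⟩
  · rintro (rfl | ⟨a, ha, rfl⟩) <;> omega

lemma succ_inj' : Function.Injective (· + 1 : ℕ → ℕ) := add_left_injective 1

lemma card_filter_range_succ (m : ℕ) (Q : ℕ → Prop) [DecidablePred Q] :
    ((Finset.range (m + 1)).filter Q).card =
      (if Q 0 then 1 else 0) + ((Finset.range m).filter fun k => Q (k + 1)).card := by
  rw [range_succ_shift, Finset.filter_insert]
  have himg : ((Finset.range m).image (· + 1)).filter Q =
      ((Finset.range m).filter fun k => Q (k + 1)).image (· + 1) :=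
    Finset.filter_image
  split
  · rw [Finset.card_insert_of_notMem, himg,
      Finset.card_image_of_injective _ succ_inj']
    · omega
    · intro hmem
      have := Finset.mem_of_mem_filter _ hmem
      simp only [Finset.mem_image, Finset.mem_range] at this
      obtain ⟨a, _, ha⟩ := this
      omega
  · rw [himg, Finset.card_image_of_injective _ succ_inj']
    omega

lemma descentCount_eq_range (w : List ℕ) :
    descentCount w =
      ((Finset.range (w.length - 1)).filter fun k => w.getD (k + 1) 0 < w.getD k 0).card := by
  unfold descentCount
  rw [← range_shift, Finset.filter_image, Finset.card_image_of_injective _ succ_inj']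
  simp only [Nat.add_sub_cancel]

lemma descentCount_cons_cons (a b : ℕ) (t : List ℕ) :
    descentCount (a :: b :: t) = (if b < a then 1 else 0) + descentCount (b :: t) := by
  rw [descentCount_eq_range, descentCount_eq_range]
  simp only [List.length_cons, Nat.add_sub_cancel]
  rw [card_filter_range_succ]
  rfl

theorem descentCount_eq_desc2 : ∀ w : List ℕ, descentCount w = desc2 w
  | [] => by simp [descentCount, desc2]
  | [a] => by simp [descentCount, desc2]
  | a :: b :: t => by
    rw [descentCount_cons_cons, descentCount_eq_desc2 (b :: t)]; rfl

lemma dualFS_eq (x : ℕ) (w : List ℕ) (hx : x ∈ w) :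
    dualFS x w = fsW1 x w ++ fsW4 x w ++ [x] ++ fsW2 x w ++ fsW5 x w := by
  unfold dualFS; rw [if_pos hx]

lemma fsW2_lt (x : ℕ) (w : List ℕ) : ∀ b ∈ fsW2 x w, b < x := by
  intro b hb
  unfold fsW2 at hb
  rw [List.mem_reverse] at hb
  simpa using List.mem_takeWhile_imp hb

lemma fsW4_lt (x : ℕ) (w : List ℕ) : ∀ b ∈ fsW4 x w, b < x := by
  intro b hb
  unfold fsW4 at hb
  simpa using List.mem_takeWhile_imp hb

lemma fsW1_subset (x : ℕ) (w : List ℕ) : ∀ b ∈ fsW1 x w, b ∈ w.take (w.idxOf x) := by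
  intro b hb
  unfold fsW1 at hb
  rw [List.mem_reverse] at hb
  have := List.dropWhile_sublist (l := (w.take (w.idxOf x)).reverse)
    (p := fun a => decide (a < x))
  have hb' := this.mem hb
  rwa [List.mem_reverse] at hb'

lemma fsW5_subset (x : ℕ) (w : List ℕ) : ∀ b ∈ fsW5 x w, b ∈ w.drop (w.idxOf x + 1) := by
  intro b hb
  unfold fsW5 at hb
  exact (List.dropWhile_sublist _).mem hb

lemma fsW1_getLast_not_lt (x : ℕ) (w : List ℕ) (h : fsW1 x w ≠ []) :
    ¬ ((fsW1 x w).getLast h < x) := by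
  set r := (w.take (w.idxOf x)).reverse with hr
  have h' : r.dropWhile (fun a => decide (a < x)) ≠ [] := by
    intro he
    apply h
    unfold fsW1
    rw [← hr, he]; rfl
  have hhead := List.head_dropWhile_not (fun a => decide (a < x)) h'
  have hL : (fsW1 x w).getLast? = (r.dropWhile (fun a => decide (a < x))).head? := by
    unfold fsW1
    rw [← hr, List.getLast?_reverse]
  rw [List.getLast?_eq_getLast h, List.head?_eq_head h'] at hL
  have : (fsW1 x w).getLast h = (r.dropWhile (fun a => decide (a < x))).head h' :=
    Option.some_injective _ hL
  rw [this]
  simpa using hhead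

lemma fsW5_head_not_lt (x : ℕ) (w : List ℕ) (h : fsW5 x w ≠ []) :
    ¬ ((fsW5 x w).head h < x) := by
  have hhead := List.head_dropWhile_not (fun a => decide (a < x))
    h
  simp at hhead; exact not_lt.2 hhead
/-- Lemma 3.2: for each pinnacle `p` of `π`, the permutations `π`
and `φ_p(π)` have the same number of descents. -/
theorem descentCount_dualFS (n : ℕ) (π : List ℕ) (hπ : IsPermOf n π) :
    ∀ p ∈ pinnSet π, descentCount π = descentCount (dualFS p π) := by
  intro p hp
  obtain ⟨i, hi, hpi⟩ := Finset.mem_image.1 hp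
  rw [Finset.mem_filter] at hi
  obtain ⟨hiIcc, h1, h2⟩ := hi
  rw [Finset.mem_Icc] at hiIcc
  have hnd : π.Nodup := hπ.symm.nodup (List.nodup_range' (s := 1) (n := n))
  have hiL : i - 1 < π.length := by omega
  have hgetp : π[i - 1] = p := by rw [← hpi, List.getD_eq_getElem _ _ hiL]
  have hpmem : p ∈ π := hgetp ▸ List.getElem_mem hiL
  set k := π.idxOf p with hk
  have hkL : k < π.length := List.idxOf_lt_length_iff.2 hpmem
  have hki : k = i - 1 := by
    have : π[k] = π[i - 1] := by rw [List.getElem_idxOf hkL, hgetp]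
    exact hnd.getElem_inj_iff.1 this
  have hexti : ext π i = (p : ℕ∞) := by
    unfold ext
    rw [if_pos ⟨hiIcc.1, hiIcc.2⟩, hpi]
  rw [hexti] at h1 h2
  -- i ≥ 2
  have hi2 : 2 ≤ i := by
    by_contra hlt
    have hi1 : i = 1 := by omega
    subst hi1
    have : ext π 0 = ⊤ := by unfold ext; rw [if_neg (by omega)]
    rw [this] at h1
    exact not_top_lt h1
  -- i < length
  have hiLt : i < π.length := by
    by_contra hge
    have hieq : i = π.length := by omega
    have : ext π (i + 1) = ⊤ := by unfold ext; rw [if_neg (by omega)]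
    rw [this] at h2
    exact not_top_lt h2
  have h1' : ext π (i - 1) = ((π.getD (i - 2) 0 : ℕ) : ℕ∞) := by
    unfold ext
    rw [if_pos ⟨by omega, by omega⟩]
    congr 2
  have h2' : ext π (i + 1) = ((π.getD i 0 : ℕ) : ℕ∞) := by
    unfold ext
    rw [if_pos ⟨by omega, by omega⟩]
    simp only [Nat.add_sub_cancel]
  rw [h1'] at h1
  rw [h2'] at h2
  have hb : π.getD (i - 2) 0 < p := by exact_mod_cast h1
  have hc : π.getD i 0 < p := by exact_mod_cast h2
  have hbg : π[i - 2]'(by omega) < p := by rwa [List.getD_eq_getElem _ _ (by omega)] at hb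
  have hcg : π[i]'hiLt < p := by rwa [List.getD_eq_getElem _ _ hiLt] at hc
  -- fsW2 nonempty
  have hB : fsW2 p π ≠ [] := by
    unfold fsW2
    rw [ne_eq, List.reverse_eq_nil_iff, List.takeWhile_eq_nil_iff]
    push_neg
    have hlen : 0 < ((π.take k).reverse).length := by
      simp only [List.length_reverse, List.length_take]
      omega
    refine ⟨hlen, ?_⟩
    have hget : ((π.take k).reverse).get ⟨0, hlen⟩ = π[i - 2]'(by omega) := by
      have h0 : ((π.take k).reverse).get ⟨0, hlen⟩ = ((π.take k).reverse)[0]'hlen := rfl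
      rw [h0, List.getElem_reverse, List.getElem_take]
      congr 1
      simp only [List.length_take]
      omega
    rw [hget]
    simpa using hbg
  -- fsW4 nonempty
  have hC : fsW4 p π ≠ [] := by
    unfold fsW4
    rw [ne_eq, List.takeWhile_eq_nil_iff]
    push_neg
    have hlen : 0 < (π.drop (k + 1)).length := by
      simp only [List.length_drop]
      omega
    refine ⟨hlen, ?_⟩
    have hget : (π.drop (k + 1)).get ⟨0, hlen⟩ = π[i]'hiLt := by
      have h0 : (π.drop (k + 1)).get ⟨0, hlen⟩ = (π.drop (k + 1))[0]'hlen := rfl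
      rw [h0, List.getElem_drop]
      congr 1
      omega
    rw [hget]
    simpa using hcg
  -- p not in the prefix/suffix
  have hpTake : p ∉ π.take k := by
    intro hmem
    obtain ⟨j, hj, hje⟩ := List.getElem_of_mem hmem
    have hjk : j < k := by simp only [List.length_take] at hj; omega
    have hjlen : j < π.length := by omega
    rw [List.getElem_take] at hje
    have : j = k := hnd.getElem_inj_iff.1 (by rw [hje, List.getElem_idxOf hkL])
    omega
  have hpDrop : p ∉ π.drop (k + 1) := by
    intro hmem
    obtain ⟨j, hj, hje⟩ := List.getElem_of_mem hmem
    rw [List.getElem_drop] at hje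
    have : k + 1 + j = k := hnd.getElem_inj_iff.1 (by rw [hje, List.getElem_idxOf hkL])
    omega
  have hA_gt : ∀ h : fsW1 p π ≠ [], p < (fsW1 p π).getLast h := by
    intro h
    have hnlt := fsW1_getLast_not_lt p π h
    have hne : (fsW1 p π).getLast h ≠ p := by
      intro he
      exact hpTake (he ▸ fsW1_subset p π _ (List.getLast_mem h))
    omega
  have hD_gt : ∀ h : fsW5 p π ≠ [], p < (fsW5 p π).head h := by
    intro h
    have hnlt := fsW5_head_not_lt p π h
    have hne : (fsW5 p π).head h ≠ p := by
      intro he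
      exact hpDrop (he ▸ fsW5_subset p π _ (List.head_mem h))
    omega
  have hBlt := fsW2_lt p π
  have hClt := fsW4_lt p π
  -- abbreviations
  set A := fsW1 p π with hAdef
  set B := fsW2 p π with hBdef
  set C := fsW4 p π with hCdef
  set D := fsW5 p π with hDdef
  have hdec : π = A ++ (B ++ ([p] ++ (C ++ D))) := by
    have := fs_decomp p π hpmem
    rw [this]; simp [List.append_assoc]; rfl
  have himg : dualFS p π = A ++ (C ++ ([p] ++ (B ++ D))) := by
    have := dualFS_eq p π hpmem
    rw [this]; simp [List.append_assoc]; rfl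
  rw [descentCount_eq_desc2, descentCount_eq_desc2, himg]
  conv_lhs => rw [hdec]
  -- expand
  have expand : ∀ X Y : List ℕ,
      desc2 (A ++ (X ++ ([p] ++ (Y ++ D)))) =
        desc2 A + link A (X ++ ([p] ++ (Y ++ D))) +
          (desc2 X + link X ([p] ++ (Y ++ D)) +
            (desc2 [p] + link [p] (Y ++ D) + (desc2 Y + link Y D + desc2 D))) := by
    intro X Y
    rw [desc2_append, desc2_append, desc2_append, desc2_append]
  rw [expand B C, expand C B]
  -- evaluate the link terms
  have hlinkA : link A (B ++ ([p] ++ (C ++ D))) = link A (C ++ ([p] ++ (B ++ D))) := by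
    rw [link_append_right _ _ _ hB, link_append_right _ _ _ hC]
    rcases eq_or_ne A [] with h | h
    · rw [h, link_nil_left, link_nil_left]
    · rw [link_eval A B h hB, link_eval A C h hC, if_pos, if_pos]
      · exact lt_trans (hClt _ (List.head_mem hC)) (hA_gt h)
      · exact lt_trans (hBlt _ (List.head_mem hB)) (hA_gt h)
  have hlinkB : link B ([p] ++ (C ++ D)) = 0 := by
    rw [link_append_right _ _ _ (by simp : ([p] : List ℕ) ≠ []),
      link_eval B [p] hB (by simp), if_neg]
    have := hBlt _ (List.getLast_mem hB)
    simp only [List.head_cons]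
    omega
  have hlinkC : link C ([p] ++ (B ++ D)) = 0 := by
    rw [link_append_right _ _ _ (by simp : ([p] : List ℕ) ≠ []),
      link_eval C [p] hC (by simp), if_neg]
    have := hClt _ (List.getLast_mem hC)
    simp only [List.head_cons]
    omega
  have hlinkPC : link [p] (C ++ D) = 1 := by
    rw [link_append_right _ _ _ hC, link_eval [p] C (by simp) hC, if_pos]
    have := hClt _ (List.head_mem hC)
    simpa using this
  have hlinkPB : link [p] (B ++ D) = 1 := by
    rw [link_append_right _ _ _ hB, link_eval [p] B (by simp) hB, if_pos]
    have := hBlt _ (List.head_mem hB)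
    simpa using this
  have hlinkCD : link C D = 0 := by
    rcases eq_or_ne D [] with h | h
    · rw [h, link_nil_right]
    · rw [link_eval C D hC h, if_neg]
      have h1 := hClt _ (List.getLast_mem hC)
      have h2 := hD_gt h
      omega
  have hlinkBD : link B D = 0 := by
    rcases eq_or_ne D [] with h | h
    · rw [h, link_nil_right]
    · rw [link_eval B D hB h, if_neg]
      have h1 := hBlt _ (List.getLast_mem hB)
      have h2 := hD_gt h
      omega
  rw [hlinkA, hlinkB, hlinkC, hlinkPC, hlinkPB, hlinkCD, hlinkBD]
  omega
end

section
/- Let π ∈ S_n and let x, y be two distinct elements of [n]. If v_1 v_2 x v_4 v_5 is the x-factorization of π and α_1 α_2 x α_4 α_5 is the x-factorization of φ_y(π), then max(v_2) = max(α_2) and max(v_4) = max(α_4), where max of a word is its largest letter (with the convention max(∅) = 0 for the empty word). -/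
open List

private lemma takeWhile_eq_self' {α : Type} {p : α → Bool} {u : List α}
    (h : ∀ a ∈ u, p a) : u.takeWhile p = u := by
  induction u with
  | nil => rfl
  | cons a l ih =>
    rw [List.takeWhile_cons, if_pos (h a (by simp)), ih (fun b hb => h b (by simp [hb]))]

private lemma takeWhile_append_all {α : Type} {p : α → Bool} {u v : List α}
    (h : ∀ a ∈ u, p a) : (u ++ v).takeWhile p = u ++ v.takeWhile p := by
  rw [takeWhile_append, if_pos (by rw [takeWhile_eq_self' h])]

private lemma takeWhile_append_ex {α : Type} {p : α → Bool} {u v : List α} {a : α}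
    (ha : a ∈ u) (hpa : p a = false) : (u ++ v).takeWhile p = u.takeWhile p := by
  rw [takeWhile_append, if_neg]
  intro hlen
  have heq : u.takeWhile p = u := (takeWhile_prefix p).eq_of_length hlen
  have := mem_takeWhile_imp (x := a) (by rw [heq]; exact ha)
  simp [hpa] at this

private lemma wmax_perm {l l' : List ℕ} (h : l.Perm l') : wmax l = wmax l' := by
  unfold wmax
  haveI : LeftCommutative (max : ℕ → ℕ → ℕ) := ⟨fun a b c => max_left_comm a b c⟩
  exact h.foldr_eq 0

private lemma exists_split {x : ℕ} {l : List ℕ} (h : x ∈ l) :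
    ∃ u v, l = u ++ x :: v ∧ x ∉ u := by
  induction l with
  | nil => simp at h
  | cons a t ih =>
    by_cases hax : a = x
    · exact ⟨[], t, by simp [hax], by simp⟩
    · obtain ⟨u, v, rfl, hxu⟩ := ih (by
        rcases List.mem_cons.mp h with h' | h'
        · exact absurd h'.symm hax
        · exact h')
      exact ⟨a :: u, v, rfl, by simp [hxu]; exact fun e => hax e.symm⟩

private lemma dropWhile_head_false {α : Type} {p : α → Bool} {l r : List α} {a : α}
    (h : l.dropWhile p = a :: r) : p a = false := by
  have hne : l.dropWhile p ≠ [] := by simp [h]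
  have h1 : (l.dropWhile p).head? = some a := by rw [h]; rfl
  rw [List.head?_eq_head hne] at h1
  have h2 := List.head_dropWhile_not p hne
  rwa [Option.some_inj.mp h1] at h2

private lemma fs_factor {y : ℕ} {w : List ℕ} (h : y ∈ w) :
    w = fsW1 y w ++ fsW2 y w ++ [y] ++ fsW4 y w ++ fsW5 y w := by
  have h1 : w.idxOf y < w.length := idxOf_lt_length_iff.mpr h
  have h2 : fsW1 y w ++ fsW2 y w = w.take (w.idxOf y) := by
    unfold fsW1 fsW2
    rw [← List.reverse_append, List.takeWhile_append_dropWhile, List.reverse_reverse]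
  have h3 : fsW4 y w ++ fsW5 y w = w.drop (w.idxOf y + 1) :=
    List.takeWhile_append_dropWhile
  have h4 : w.drop (w.idxOf y) = y :: w.drop (w.idxOf y + 1) := by
    rw [List.drop_eq_getElem_cons h1, List.getElem_idxOf h1]
  calc w = w.take (w.idxOf y) ++ w.drop (w.idxOf y) := (List.take_append_drop _ _).symm
  _ = _ := by rw [h4, ← h2, ← h3]; simp [List.append_assoc]

private lemma fsW2_split {x : ℕ} {u v : List ℕ} (hxu : x ∉ u) :
    fsW2 x (u ++ x :: v) = ((u.reverse.takeWhile fun a => decide (a < x))).reverse := by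
  unfold fsW2
  rw [idxOf_append_of_notMem hxu, idxOf_cons_self, Nat.add_zero, take_left]

private lemma fsW4_split {x : ℕ} {u v : List ℕ} (hxu : x ∉ u) :
    fsW4 x (u ++ x :: v) = v.takeWhile fun a => decide (a < x) := by
  unfold fsW4
  rw [idxOf_append_of_notMem hxu, idxOf_cons_self, Nat.add_zero,
    show u ++ x :: v = (u ++ [x]) ++ v by simp,
    drop_left' (by simp)]

private lemma fsW1_last {y a : ℕ} {w l : List ℕ} (h : fsW1 y w = l ++ [a]) : y ≤ a := by
  unfold fsW1 at h
  have h' : (w.take (w.idxOf y)).reverse.dropWhile (fun b => decide (b < y))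
      = a :: l.reverse := by
    have := congrArg List.reverse h
    simpa using this
  have := dropWhile_head_false h'
  simp at this
  omega

private lemma fsW5_head {y a : ℕ} {w l : List ℕ} (h : fsW5 y w = a :: l) : y ≤ a := by
  unfold fsW5 at h
  have := dropWhile_head_false h
  simp at this
  omega

private lemma fsW2_lt_s7 {y a : ℕ} {w : List ℕ} (h : a ∈ fsW2 y w) : a < y := by
  unfold fsW2 at h
  rw [mem_reverse] at h
  simpa using mem_takeWhile_imp h

private lemma fsW4_lt_s7 {y a : ℕ} {w : List ℕ} (h : a ∈ fsW4 y w) : a < y := by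
  unfold fsW4 at h
  simpa using mem_takeWhile_imp h

private lemma takeWhile_fsW5 {x y : ℕ} (hxy : x ≤ y) (w : List ℕ) :
    (fsW5 y w).takeWhile (fun a => decide (a < x)) = [] := by
  cases h : fsW5 y w with
  | nil => simp
  | cons a l =>
    have := fsW5_head h
    rw [takeWhile_cons, if_neg (by simp; omega)]

private lemma takeWhile_rev_fsW1 {x y : ℕ} (hxy : x ≤ y) (w : List ℕ) :
    (fsW1 y w).reverse.takeWhile (fun a => decide (a < x)) = [] := by
  cases h : (fsW1 y w).reverse with
  | nil => simp
  | cons a l =>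
    have h2 : fsW1 y w = l.reverse ++ [a] := by
      rw [← reverse_reverse (fsW1 y w), h]; simp
    have := fsW1_last h2
    rw [takeWhile_cons, if_neg (by simp; omega)]

private lemma takeWhile_congr_nil {p : ℕ → Bool} {s A B : List ℕ}
    (hA : A.takeWhile p = []) (hB : B.takeWhile p = []) :
    (s ++ A).takeWhile p = (s ++ B).takeWhile p := by
  by_cases h : ∀ a ∈ s, p a
  · rw [takeWhile_append_all h, takeWhile_append_all h, hA, hB]
  · push_neg at h
    obtain ⟨a, ha, hpa⟩ := h
    rw [takeWhile_append_ex ha (by simpa using hpa), takeWhile_append_ex ha (by simpa using hpa)]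

private lemma perm_rot (a b c : List ℕ) : (a ++ (b ++ c)).Perm (c ++ (b ++ a)) := by
  calc a ++ (b ++ c) ~ (b ++ c) ++ a := perm_append_comm
  _ = b ++ (c ++ a) := by simp
  _ ~ (c ++ a) ++ b := perm_append_comm
  _ = c ++ (a ++ b) := by simp
  _ ~ c ++ (b ++ a) := (perm_append_comm (l₁ := a)).append_left c

private lemma takeWhile_perm_congr {p : ℕ → Bool} {s t b b' : List ℕ} (hb : b.Perm b')
    (h : (∀ a ∈ b, p a) ∨ ∃ a ∈ s, p a = false) :
    ((s ++ (b ++ t)).takeWhile p).Perm ((s ++ (b' ++ t)).takeWhile p) := by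
  rcases h with h | ⟨a, ha, hpa⟩
  · have hb' : ∀ a ∈ b', p a := fun a hm => h a (hb.mem_iff.mpr hm)
    by_cases hs : ∀ a ∈ s, p a
    · rw [takeWhile_append_all hs, takeWhile_append_all hs,
        takeWhile_append_all h, takeWhile_append_all hb']
      exact ((hb.append_right _).append_left s)
    · push_neg at hs
      obtain ⟨a, ha, hpa⟩ := hs
      rw [takeWhile_append_ex ha (by simpa using hpa),
        takeWhile_append_ex ha (by simpa using hpa)]
  · rw [takeWhile_append_ex ha hpa, takeWhile_append_ex ha hpa]

private lemma nodup_facts {w1 w2 w4 w5 : List ℕ} {y : ℕ}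
    (h : (w1 ++ w2 ++ [y] ++ w4 ++ w5).Nodup) (x : ℕ) :
    (x ∈ w1 → x ∉ w2 ∧ x ≠ y ∧ x ∉ w4 ∧ x ∉ w5) ∧
    (x ∈ w2 → x ∉ w1 ∧ x ≠ y ∧ x ∉ w4 ∧ x ∉ w5) ∧
    (x ∈ w4 → x ∉ w1 ∧ x ∉ w2 ∧ x ≠ y ∧ x ∉ w5) ∧
    (x ∈ w5 → x ∉ w1 ∧ x ∉ w2 ∧ x ≠ y ∧ x ∉ w4) := by
  simp only [List.nodup_append', List.disjoint_left, List.mem_append, List.mem_cons,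
    List.mem_singleton, List.not_mem_nil, or_false] at h
  obtain ⟨⟨⟨⟨_, _, h12⟩, _, h12y⟩, _, h124⟩, _, h1245⟩ := h
  refine ⟨fun hx => ?_, fun hx => ?_, fun hx => ?_, fun hx => ?_⟩
  · exact ⟨fun c => h12 hx c, fun c => h12y (Or.inl hx) c, fun c => h124 (Or.inl (Or.inl hx)) c,
      fun c => h1245 (Or.inl (Or.inl (Or.inl hx))) c⟩
  · exact ⟨fun c => h12 c hx, fun c => h12y (Or.inr hx) c, fun c => h124 (Or.inl (Or.inr hx)) c,
      fun c => h1245 (Or.inl (Or.inl (Or.inr hx))) c⟩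
  · exact ⟨fun c => h124 (Or.inl (Or.inl c)) hx, fun c => h124 (Or.inl (Or.inr c)) hx,
      fun c => h124 (Or.inr c) hx, fun c => h1245 (Or.inr hx) c⟩
  · exact ⟨fun c => h1245 (Or.inl (Or.inl (Or.inl c))) hx,
      fun c => h1245 (Or.inl (Or.inl (Or.inr c))) hx,
      fun c => h1245 (Or.inl (Or.inr c)) hx, fun c => h1245 (Or.inr c) hx⟩

private lemma wmax_rev_perm {l l' : List ℕ} (h : l.Perm l') :
    wmax l.reverse = wmax l'.reverse :=
  wmax_perm ((reverse_perm l).trans (h.trans (reverse_perm l').symm))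

/-- Lemma 3.3: for distinct `x, y ∈ [n]`, the maxima of the words
`w₂` and `w₄` of the `x`-factorization are unchanged by `φ_y`. -/
theorem fs_factorization_max (n x y : ℕ) (hx : x ∈ Finset.Icc 1 n) (hy : y ∈ Finset.Icc 1 n)
    (hxy : x ≠ y) (π : List ℕ) (hπ : IsPermOf n π) :
    wmax (fsW2 x π) = wmax (fsW2 x (dualFS y π)) ∧
      wmax (fsW4 x π) = wmax (fsW4 x (dualFS y π)) := by
  simp only [Finset.mem_Icc] at hx hy
  have hmemx : x ∈ π := by rw [hπ.mem_iff, List.mem_range'_1]; omega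
  have hmemy : y ∈ π := by rw [hπ.mem_iff, List.mem_range'_1]; omega
  have hnd : π.Nodup := (hπ.nodup_iff).mpr (List.nodup_range' (s := 1) (n := n))
  set w1 := fsW1 y π with hw1
  set w2 := fsW2 y π with hw2
  set w4 := fsW4 y π with hw4
  set w5 := fsW5 y π with hw5
  have hfac : π = w1 ++ w2 ++ [y] ++ w4 ++ w5 := fs_factor hmemy
  have hφ : dualFS y π = w1 ++ w4 ++ [y] ++ w2 ++ w5 := by
    rw [dualFS, if_pos hmemy]
  have hndf := nodup_facts (hfac ▸ hnd) x
  have hw2lt : ∀ a ∈ w2, a < y := fun a ha => fsW2_lt_s7 (hw2 ▸ ha)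
  have hw4lt : ∀ a ∈ w4, a < y := fun a ha => fsW4_lt_s7 (hw4 ▸ ha)
  have hmemx' : x ∈ w1 ∨ x ∈ w2 ∨ x = y ∨ x ∈ w4 ∨ x ∈ w5 := by
    rw [hfac] at hmemx; simpa using hmemx
  rcases hmemx' with hx1 | hx2 | hxy' | hx4 | hx5
  -- Case x ∈ w1
  · obtain ⟨u, v, huv, hxu⟩ := exists_split hx1
    have eqπ : π = u ++ x :: (v ++ ((w2 ++ ([y] ++ w4)) ++ w5)) := by
      rw [hfac, huv]; simp
    have eqφ : dualFS y π = u ++ x :: (v ++ ((w4 ++ ([y] ++ w2)) ++ w5)) := by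
      rw [hφ, huv]; simp
    constructor
    · rw [eqφ, eqπ, fsW2_split hxu, fsW2_split hxu]
    · rw [eqφ, eqπ, fsW4_split hxu, fsW4_split hxu]
      apply wmax_perm
      apply takeWhile_perm_congr (perm_rot w2 [y] w4)
      rcases Nat.lt_or_ge x y with hlt | hge
      · right
        rcases eq_nil_or_concat v with rfl | ⟨l, a, rfl⟩
        · have : y ≤ x := fsW1_last (l := u) (w := π) (by rw [← hw1, huv])
          omega
        · have hya : y ≤ a := fsW1_last (l := u ++ x :: l) (w := π)
            (by rw [← hw1, huv]; simp)
          exact ⟨a, by simp, by simp; omega⟩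
      · left
        intro a hma
        simp only [List.mem_append, List.mem_singleton] at hma
        simp only [decide_eq_true_eq]
        rcases hma with h | h | h
        · have := hw2lt a h; omega
        · omega
        · have := hw4lt a h; omega
  -- Case x ∈ w2
  · have hxlty : x < y := hw2lt x hx2
    obtain ⟨hxw1, -, hxw4, hxw5⟩ := hndf.2.1 hx2
    obtain ⟨u, v, huv, hxu⟩ := exists_split hx2
    have eqπ : π = (w1 ++ u) ++ x :: (v ++ ([y] ++ (w4 ++ w5))) := by
      rw [hfac, huv]; simp
    have eqφ : dualFS y π = ((w1 ++ (w4 ++ [y])) ++ u) ++ x :: (v ++ w5) := by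
      rw [hφ, huv]; simp
    have hxP1 : x ∉ w1 ++ u := by simp [hxw1, hxu]
    have hxP2 : x ∉ (w1 ++ (w4 ++ [y])) ++ u := by simp [hxw1, hxw4, hxu, hxy]
    constructor
    · rw [eqφ, eqπ, fsW2_split hxP1, fsW2_split hxP2]
      have e : ((w1 ++ u).reverse.takeWhile fun a => decide (a < x))
          = (((w1 ++ (w4 ++ [y])) ++ u).reverse.takeWhile fun a => decide (a < x)) := by
        rw [show (w1 ++ u).reverse = u.reverse ++ w1.reverse by simp,
          show ((w1 ++ (w4 ++ [y])) ++ u).reverse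
            = u.reverse ++ (y :: (w4.reverse ++ w1.reverse)) by simp]
        exact takeWhile_congr_nil
          (by rw [hw1]; exact takeWhile_rev_fsW1 (le_of_lt hxlty) π)
          (by rw [takeWhile_cons, if_neg (by simp; omega)])
      rw [e]
    · rw [eqφ, eqπ, fsW4_split hxP1, fsW4_split hxP2]
      have e : ((v ++ ([y] ++ (w4 ++ w5))).takeWhile fun a => decide (a < x))
          = ((v ++ w5).takeWhile fun a => decide (a < x)) :=
        takeWhile_congr_nil
          (by rw [show ([y] ++ (w4 ++ w5)) = y :: (w4 ++ w5) from rfl,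
              takeWhile_cons, if_neg (by simp; omega)])
          (by rw [hw5]; exact takeWhile_fsW5 (le_of_lt hxlty) π)
      rw [e]
  -- Case x = y
  · exact absurd hxy' hxy
  -- Case x ∈ w4
  · have hxlty : x < y := hw4lt x hx4
    obtain ⟨hxw1, hxw2, -, hxw5⟩ := hndf.2.2.1 hx4
    obtain ⟨u, v, huv, hxu⟩ := exists_split hx4
    have eqπ : π = ((w1 ++ (w2 ++ [y])) ++ u) ++ x :: (v ++ w5) := by
      rw [hfac, huv]; simp
    have eqφ : dualFS y π = (w1 ++ u) ++ x :: (v ++ ([y] ++ (w2 ++ w5))) := by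
      rw [hφ, huv]; simp
    have hxP1 : x ∉ (w1 ++ (w2 ++ [y])) ++ u := by simp [hxw1, hxw2, hxu, hxy]
    have hxP2 : x ∉ w1 ++ u := by simp [hxw1, hxu]
    constructor
    · rw [eqφ, eqπ, fsW2_split hxP1, fsW2_split hxP2]
      have e : (((w1 ++ (w2 ++ [y])) ++ u).reverse.takeWhile fun a => decide (a < x))
          = ((w1 ++ u).reverse.takeWhile fun a => decide (a < x)) := by
        rw [show ((w1 ++ (w2 ++ [y])) ++ u).reverse
            = u.reverse ++ (y :: (w2.reverse ++ w1.reverse)) by simp,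
          show (w1 ++ u).reverse = u.reverse ++ w1.reverse by simp]
        exact takeWhile_congr_nil
          (by rw [takeWhile_cons, if_neg (by simp; omega)])
          (by rw [hw1]; exact takeWhile_rev_fsW1 (le_of_lt hxlty) π)
      rw [e]
    · rw [eqφ, eqπ, fsW4_split hxP1, fsW4_split hxP2]
      have e : ((v ++ w5).takeWhile fun a => decide (a < x))
          = ((v ++ ([y] ++ (w2 ++ w5))).takeWhile fun a => decide (a < x)) :=
        takeWhile_congr_nil
          (by rw [hw5]; exact takeWhile_fsW5 (le_of_lt hxlty) π)
          (by rw [show ([y] ++ (w2 ++ w5)) = y :: (w2 ++ w5) from rfl,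
              takeWhile_cons, if_neg (by simp; omega)])
      rw [e]
  -- Case x ∈ w5
  · obtain ⟨hxw1, hxw2, -, hxw4⟩ := hndf.2.2.2 hx5
    obtain ⟨u, v, huv, hxu⟩ := exists_split hx5
    have eqπ : π = ((w1 ++ (w2 ++ ([y] ++ w4))) ++ u) ++ x :: v := by
      rw [hfac, huv]; simp
    have eqφ : dualFS y π = ((w1 ++ (w4 ++ ([y] ++ w2))) ++ u) ++ x :: v := by
      rw [hφ, huv]; simp
    have hxP1 : x ∉ (w1 ++ (w2 ++ ([y] ++ w4))) ++ u := by
      simp [hxw1, hxw2, hxw4, hxu, hxy]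
    have hxP2 : x ∉ (w1 ++ (w4 ++ ([y] ++ w2))) ++ u := by
      simp [hxw1, hxw2, hxw4, hxu, hxy]
    constructor
    · rw [eqφ, eqπ, fsW2_split hxP1, fsW2_split hxP2]
      apply wmax_rev_perm
      rw [show ((w1 ++ (w2 ++ ([y] ++ w4))) ++ u).reverse
          = u.reverse ++ ((w4.reverse ++ ([y] ++ w2.reverse)) ++ w1.reverse) by simp,
        show ((w1 ++ (w4 ++ ([y] ++ w2))) ++ u).reverse
          = u.reverse ++ ((w2.reverse ++ ([y] ++ w4.reverse)) ++ w1.reverse) by simp]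
      apply takeWhile_perm_congr (perm_rot w4.reverse [y] w2.reverse)
      rcases Nat.lt_or_ge x y with hlt | hge
      · right
        rcases u with _ | ⟨a, l⟩
        · have : y ≤ x := fsW5_head (l := v) (w := π) (by rw [← hw5, huv]; rfl)
          omega
        · have hya : y ≤ a := fsW5_head (l := l ++ x :: v) (w := π)
            (by rw [← hw5, huv]; rfl)
          exact ⟨a, by simp, by simp; omega⟩
      · left
        intro a hma
        simp only [List.mem_append, List.mem_reverse, List.mem_singleton] at hma
        simp only [decide_eq_true_eq]
        rcases hma with h | h | h
        · have := hw4lt a h; omega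
        · omega
        · have := hw2lt a h; omega
    · rw [eqφ, eqπ, fsW4_split hxP1, fsW4_split hxP2]
end
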